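/- arXiv:2211.06475 — 2 statements merged into one kernel-verified Lean document; each statement's English description precedes it below -/
import Mathlib

section
/- Let α be a type of program states, let c₁, c₂ : α → Prop be decidable predicates (branch guards) and u₁, u₂ : α → α be state updates. Assume the guards are disjoint (for every state s, not both c₁ s and c₂ s hold) and that each update preserves both guards (for all s: c₁ (u₂ s) ↔ c₁ s and c₂ (u₁ s) ↔ c₂ s). Define the guarded update gᵢ s = if cᵢ s then uᵢ s else s. Then g₁ ∘ g₂ = g₂ ∘ g₁; that is, the two guarded statements can be executed in either order with the same result, so the syntactic write-after-write dependency between them is a false dependency. -/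
/-- If two guarded updates have disjoint guards, and each update preserves both
guards, then the two guarded statements commute: they can be executed in either
order with the same result, so the syntactic write-after-write dependency
between them is a false dependency. -/
theorem guarded_updates_commute {α : Type*}
    (c₁ c₂ : α → Prop) [DecidablePred c₁] [DecidablePred c₂]
    (u₁ u₂ : α → α)
    (hdisj : ∀ s, ¬ (c₁ s ∧ c₂ s))
    (hpres₁ : ∀ s, c₁ (u₂ s) ↔ c₁ s)
    (hpres₂ : ∀ s, c₂ (u₁ s) ↔ c₂ s) :
    (fun s => if c₁ s then u₁ s else s) ∘ (fun s => if c₂ s then u₂ s else s) =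
    (fun s => if c₂ s then u₂ s else s) ∘ (fun s => if c₁ s then u₁ s else s) := by
  funext s
  simp only [Function.comp]
  by_cases h1 : c₁ s <;> by_cases h2 : c₂ s
  · exact absurd ⟨h1, h2⟩ (hdisj s)
  · simp [h1, h2, (hpres₁ s).mpr h1, (hpres₂ s).not.mpr h2]
  · simp [h1, h2, (hpres₂ s).mpr h2, (hpres₁ s).not.mpr h1]
  · simp [h1, h2]
end

section
/- Let α be a type of program states and let (c₁, u₁), …, (cₙ, uₙ) be a finite list of guard/update pairs with cᵢ : α → Prop decidable and uᵢ : α → α. Assume the guards are pairwise disjoint (for every state s and all i ≠ j, not both cᵢ s and cⱼ s hold) and every update preserves every guard (for all s, i, j: cⱼ (uᵢ s) ↔ cⱼ s). Then the sequential composition of the guarded updates gᵢ s = if cᵢ s then uᵢ s else s (executed in list order) equals the match-action semantics: for every state s, the composite result is uᵢ s if there exists (a necessarily unique) index i with cᵢ s, and is s if no guard holds. Consequently the sequence of guarded if-statements can be soundly rewritten into a single match-action table whose key selects among the disjoint guards and whose actions are the uᵢ. -/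
/-- The guarded update `g s = if c s then u s else s`. -/
def guardedUpdate {α : Type*} (c : α → Prop) [DecidablePred c] (u : α → α) (s : α) : α :=
  if c s then u s else s

/-- Sequential composition, in list order, of the guarded updates
`gᵢ s = if cᵢ s then uᵢ s else s` for `i = 0, …, n-1`. -/
def runGuarded {α : Type*} {n : ℕ} (c : Fin n → α → Prop) [∀ i, DecidablePred (c i)]
    (u : Fin n → α → α) (s : α) : α :=
  (List.finRange n).foldl (fun t i => guardedUpdate (c i) (u i) t) s

private lemma foldl_no_guard {α : Type*} {n : ℕ} (c : Fin n → α → Prop)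
    [∀ i, DecidablePred (c i)] (u : Fin n → α → α) :
    ∀ (L : List (Fin n)) (s : α), (∀ i ∈ L, ¬ c i s) →
      L.foldl (fun t i => guardedUpdate (c i) (u i) t) s = s := by
  intro L
  induction L with
  | nil => intro s _; rfl
  | cons j L ih =>
    intro s h
    have hj : ¬ c j s := h j (by simp)
    simp only [List.foldl_cons, guardedUpdate, if_neg hj]
    exact ih s (fun i hi => h i (List.mem_cons_of_mem _ hi))

private lemma foldl_guard {α : Type*} {n : ℕ} (c : Fin n → α → Prop)
    [∀ i, DecidablePred (c i)] (u : Fin n → α → α)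
    (hdisj : ∀ s, ∀ i j : Fin n, i ≠ j → ¬ (c i s ∧ c j s))
    (hpres : ∀ s, ∀ i j : Fin n, c j (u i s) ↔ c j s) :
    ∀ (L : List (Fin n)), L.Nodup → ∀ (s : α) (i : Fin n), i ∈ L → c i s →
      L.foldl (fun t i => guardedUpdate (c i) (u i) t) s = u i s := by
  intro L
  induction L with
  | nil => intro _ s i hi; exact (List.not_mem_nil hi).elim
  | cons j L ih =>
    intro hnd s i hi hci
    rcases List.mem_cons.mp hi with rfl | hiL
    · -- j = i : fire
      simp only [List.foldl_cons, guardedUpdate, if_pos hci]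
      apply foldl_no_guard
      intro k hk
      rw [hpres]
      have hki : k ≠ i := by
        rintro rfl; exact (List.nodup_cons.mp hnd).1 hk
      exact fun hcks => hdisj s k i hki ⟨hcks, hci⟩
    · have hji : j ≠ i := by
        rintro rfl; exact (List.nodup_cons.mp hnd).1 hiL
      have hj : ¬ c j s := fun hcj => hdisj s j i hji ⟨hcj, hci⟩
      simp only [List.foldl_cons, guardedUpdate, if_neg hj]
      exact ih (List.nodup_cons.mp hnd).2 s i hiL hci

/-- If the guards of a finite list of guard/update pairs are pairwise disjoint and
every update preserves every guard, then executing the guarded updates in sequence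
equals the match-action semantics: at most one guard holds in any state, the
composite is `uᵢ s` when guard `cᵢ` holds, and the composite is `s` when no guard
holds.  Hence the sequence of guarded if-statements can be soundly rewritten into a
single match-action table selecting among the disjoint guards. -/
theorem guarded_sequence_eq_match_action {α : Type*} {n : ℕ}
    (c : Fin n → α → Prop) [∀ i, DecidablePred (c i)] (u : Fin n → α → α)
    (hdisj : ∀ s, ∀ i j : Fin n, i ≠ j → ¬ (c i s ∧ c j s))
    (hpres : ∀ s, ∀ i j : Fin n, c j (u i s) ↔ c j s) :
    ∀ s : α,
      (∀ i j : Fin n, c i s → c j s → i = j) ∧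
      (∀ i : Fin n, c i s → runGuarded c u s = u i s) ∧
      ((∀ i : Fin n, ¬ c i s) → runGuarded c u s = s) := by
  intro s
  refine ⟨fun i j hi hj => ?_, fun i hi => ?_, fun h => ?_⟩
  · by_contra hne
    exact hdisj s i j hne ⟨hi, hj⟩
  · exact foldl_guard c u hdisj hpres _ (List.nodup_finRange n) s i
      (List.mem_finRange i) hi
  · exact foldl_no_guard c u _ s (fun i _ => h i)
end
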